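/- arXiv:2006.04425 — 8 statements merged into one kernel-verified Lean document; each statement's English description precedes it below -/
import Mathlib

section
/- If two points p₁ = (x₁, y) and p₂ = (x₂, y) in ℝ² have the same second coordinate (i.e., are coaxial in direction (-1,0)) with x₁ < x₂ ≤ c - a for appropriate parameters, then there are infinitely many tropical lines passing through both points; specifically, every tropical line with vertex (v₁, y) satisfying v₁ ≥ x₂ contains both points. -/
/-- The half-ray from `v` in direction `d`. -/
def tropRay (v d : ℝ × ℝ) : Set (ℝ × ℝ) := {p | ∃ t : ℝ, 0 ≤ t ∧ p = v + t • d}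

/-- The tropical line with vertex `v`: the union of the three half-rays from `v` in the
directions `(-1,0)`, `(0,-1)` and `(1,1)`. -/
def tropLine (v : ℝ × ℝ) : Set (ℝ × ℝ) :=
  tropRay v (-1, 0) ∪ tropRay v (0, -1) ∪ tropRay v (1, 1)

lemma mem_left_ray (x v y : ℝ) (hx : x ≤ v) : (x, y) ∈ tropLine (v, y) := by
  left; left
  exact ⟨v - x, by linarith, by simp [Prod.ext_iff]⟩

/-- If `p₁ = (x₁,y)` and `p₂ = (x₂,y)` are coaxial in direction `(-1,0)` with `x₁ < x₂`,
then every tropical line with vertex `(v₁, y)` with `v₁ ≥ x₂` contains both points, and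
there are infinitely many tropical lines through both points. -/
theorem infinitely_many_lines_through_coaxial_points (x₁ x₂ y : ℝ) (h : x₁ < x₂) :
    (∀ v₁ : ℝ, x₂ ≤ v₁ → (x₁, y) ∈ tropLine (v₁, y) ∧ (x₂, y) ∈ tropLine (v₁, y)) ∧
      {v : ℝ × ℝ | (x₁, y) ∈ tropLine v ∧ (x₂, y) ∈ tropLine v}.Infinite := by
  have key : ∀ v₁ : ℝ, x₂ ≤ v₁ →
      (x₁, y) ∈ tropLine (v₁, y) ∧ (x₂, y) ∈ tropLine (v₁, y) := fun v₁ hv =>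
    ⟨mem_left_ray _ _ _ (by linarith), mem_left_ray _ _ _ hv⟩
  refine ⟨key, ?_⟩
  have : Set.MapsTo (fun v₁ : ℝ => (v₁, y)) (Set.Ici x₂)
      {v : ℝ × ℝ | (x₁, y) ∈ tropLine v ∧ (x₂, y) ∈ tropLine v} := fun v₁ hv => key v₁ hv
  exact Set.Infinite.mono this.image_subset
    ((Set.Ici_infinite x₂).image (fun a _ b _ hab => (Prod.ext_iff.1 hab).1))
end

section
/- If two points p₁, p₂ ∈ ℝ² are not coaxial (do not lie on a common ray of any tropical line through them), then there is a unique tropical line passing through both, and this line is stable. -/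
/-- The three primitive ray directions of a tropical line. -/
def tropDirs : Set (ℝ × ℝ) := {(-1, 0), (0, -1), (1, 1)}

/-- Two points are coaxial if they lie on the same half-ray (axis) of some tropical line
containing them both. -/
def Coaxial (p q : ℝ × ℝ) : Prop :=
  ∃ v : ℝ × ℝ, p ∈ tropLine v ∧ q ∈ tropLine v ∧
    ∃ d ∈ tropDirs, p ∈ tropRay v d ∧ q ∈ tropRay v d

/-- A stable tropical line through `p₁, p₂`. -/
def StableThrough (p₁ p₂ v : ℝ × ℝ) : Prop :=
  p₁ ∈ tropLine v ∧ p₂ ∈ tropLine v ∧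
    ((∀ w : ℝ × ℝ, p₁ ∈ tropLine w ∧ p₂ ∈ tropLine w → w = v) ∨ v = p₁ ∨ v = p₂)

lemma memH {v p : ℝ × ℝ} : p ∈ tropRay v (-1, 0) ↔ p.1 ≤ v.1 ∧ p.2 = v.2 := by
  simp only [tropRay, Set.mem_setOf_eq, Prod.ext_iff, Prod.smul_mk, smul_eq_mul, Prod.fst_add, Prod.snd_add]
  constructor
  · rintro ⟨t, ht, h1, h2⟩; constructor <;> simp at h1 h2 <;> linarith
  · rintro ⟨h1, h2⟩; exact ⟨v.1 - p.1, by linarith, by simp; first | (constructor <;> linarith) | linarith⟩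

lemma memV {v p : ℝ × ℝ} : p ∈ tropRay v (0, -1) ↔ p.1 = v.1 ∧ p.2 ≤ v.2 := by
  simp only [tropRay, Set.mem_setOf_eq, Prod.ext_iff, Prod.smul_mk, smul_eq_mul, Prod.fst_add, Prod.snd_add]
  constructor
  · rintro ⟨t, ht, h1, h2⟩; constructor <;> simp at h1 h2 <;> linarith
  · rintro ⟨h1, h2⟩; exact ⟨v.2 - p.2, by linarith, by simp; first | (constructor <;> linarith) | linarith⟩

lemma memD {v p : ℝ × ℝ} : p ∈ tropRay v (1, 1) ↔ v.1 ≤ p.1 ∧ p.1 - v.1 = p.2 - v.2 := by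
  simp only [tropRay, Set.mem_setOf_eq, Prod.ext_iff, Prod.smul_mk, smul_eq_mul, Prod.fst_add, Prod.snd_add]
  constructor
  · rintro ⟨t, ht, h1, h2⟩; constructor <;> simp at h1 h2 <;> linarith
  · rintro ⟨h1, h2⟩; exact ⟨p.1 - v.1, by linarith, by simp; first | (constructor <;> linarith) | linarith⟩

lemma memLine {v p : ℝ × ℝ} : p ∈ tropLine v ↔
    (p.1 ≤ v.1 ∧ p.2 = v.2) ∨ (p.1 = v.1 ∧ p.2 ≤ v.2) ∨ (v.1 ≤ p.1 ∧ p.1 - v.1 = p.2 - v.2) := by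
  rw [tropLine]; simp only [Set.mem_union, memH, memV, memD, or_assoc]

lemma coax_h {p q : ℝ × ℝ} (h : p.2 = q.2) : Coaxial p q := by
  refine ⟨(max p.1 q.1, p.2), ?_, ?_, (-1,0), by simp [tropDirs], ?_, ?_⟩ <;>
    simp [memLine, memH, le_max_left, le_max_right, h]

lemma coax_v {p q : ℝ × ℝ} (h : p.1 = q.1) : Coaxial p q := by
  refine ⟨(p.1, max p.2 q.2), ?_, ?_, (0,-1), by simp [tropDirs], ?_, ?_⟩ <;>
    simp [memLine, memV, le_max_left, le_max_right, h]

lemma coax_d {p q : ℝ × ℝ} (h : p.1 - p.2 = q.1 - q.2) : Coaxial p q := by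
  rcases le_total p.1 q.1 with hle | hle
  · exact ⟨p, memLine.2 (Or.inr (Or.inr ⟨le_refl _, by ring⟩)),
      memLine.2 (Or.inr (Or.inr ⟨hle, by linarith⟩)),
      (1,1), by simp [tropDirs], memD.2 ⟨le_refl _, by ring⟩, memD.2 ⟨hle, by linarith⟩⟩
  · exact ⟨q, memLine.2 (Or.inr (Or.inr ⟨hle, by linarith⟩)),
      memLine.2 (Or.inr (Or.inr ⟨le_refl _, by ring⟩)),
      (1,1), by simp [tropDirs], memD.2 ⟨hle, by linarith⟩, memD.2 ⟨le_refl _, by ring⟩⟩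

lemma key {a b : ℝ × ℝ} (h1 : a.1 < b.1) (h2 : a.2 ≠ b.2) (h3 : a.1 - a.2 ≠ b.1 - b.2) :
    ∃ v : ℝ × ℝ, (a ∈ tropLine v ∧ b ∈ tropLine v) ∧
      ∀ w : ℝ × ℝ, a ∈ tropLine w ∧ b ∈ tropLine w → w = v := by
  obtain ⟨a1, a2⟩ := a
  obtain ⟨b1, b2⟩ := b
  simp only at h1 h2 h3
  rcases lt_or_gt_of_ne h2 with hv | hv
  · rcases lt_or_gt_of_ne h3 with hd | hd
    · refine ⟨(b1 - b2 + a2, a2),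
        ⟨memLine.2 (Or.inl ⟨by simp; linarith, rfl⟩),
         memLine.2 (Or.inr (Or.inr ⟨by simp; linarith, by simp; linarith⟩))⟩, ?_⟩
      rintro ⟨w1, w2⟩ ⟨ha, hb⟩
      rw [memLine] at ha hb; simp only at ha hb
      rcases ha with ⟨ha1, ha2⟩ | ⟨ha1, ha2⟩ | ⟨ha1, ha2⟩ <;>
        rcases hb with ⟨hb1, hb2⟩ | ⟨hb1, hb2⟩ | ⟨hb1, hb2⟩ <;>
        simp only [Prod.mk.injEq] <;>
        first
        | (constructor <;> linarith)
        | (exfalso; linarith)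
    · refine ⟨(a1, b2 - b1 + a1),
        ⟨memLine.2 (Or.inr (Or.inl ⟨rfl, by simp; linarith⟩)),
         memLine.2 (Or.inr (Or.inr ⟨by simp; linarith, by simp; linarith⟩))⟩, ?_⟩
      rintro ⟨w1, w2⟩ ⟨ha, hb⟩
      rw [memLine] at ha hb; simp only at ha hb
      rcases ha with ⟨ha1, ha2⟩ | ⟨ha1, ha2⟩ | ⟨ha1, ha2⟩ <;>
        rcases hb with ⟨hb1, hb2⟩ | ⟨hb1, hb2⟩ | ⟨hb1, hb2⟩ <;>
        simp only [Prod.mk.injEq] <;>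
        first
        | (constructor <;> linarith)
        | (exfalso; linarith)
  · refine ⟨(b1, a2),
      ⟨memLine.2 (Or.inl ⟨by simp; linarith, rfl⟩),
       memLine.2 (Or.inr (Or.inl ⟨rfl, by simp; linarith⟩))⟩, ?_⟩
    rintro ⟨w1, w2⟩ ⟨ha, hb⟩
    rw [memLine] at ha hb; simp only at ha hb
    rcases ha with ⟨ha1, ha2⟩ | ⟨ha1, ha2⟩ | ⟨ha1, ha2⟩ <;>
      rcases hb with ⟨hb1, hb2⟩ | ⟨hb1, hb2⟩ | ⟨hb1, hb2⟩ <;>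
      simp only [Prod.mk.injEq] <;>
      first
      | (constructor <;> linarith)
      | (exfalso; linarith)

/-- If two points are not coaxial, there is a unique tropical line through both,
and this line is stable. -/
theorem unique_line_through_non_coaxial (p₁ p₂ : ℝ × ℝ) (h : ¬ Coaxial p₁ p₂) :
    ∃ v : ℝ × ℝ, (p₁ ∈ tropLine v ∧ p₂ ∈ tropLine v) ∧
      (∀ w : ℝ × ℝ, p₁ ∈ tropLine w ∧ p₂ ∈ tropLine w → w = v) ∧
      StableThrough p₁ p₂ v := by
  have h1 : p₁.1 ≠ p₂.1 := fun e => h (coax_v e)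
  have h2 : p₁.2 ≠ p₂.2 := fun e => h (coax_h e)
  have h3 : p₁.1 - p₁.2 ≠ p₂.1 - p₂.2 := fun e => h (coax_d e)
  rcases lt_or_gt_of_ne h1 with hlt | hlt
  · obtain ⟨v, hmem, huniq⟩ := key hlt h2 h3
    exact ⟨v, hmem, huniq, hmem.1, hmem.2, Or.inl huniq⟩
  · obtain ⟨v, hmem, huniq⟩ := key hlt h2.symm (fun e => h3 e.symm)
    have huniq' : ∀ w : ℝ × ℝ, p₁ ∈ tropLine w ∧ p₂ ∈ tropLine w → w = v :=
      fun w hw => huniq w ⟨hw.2, hw.1⟩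
    exact ⟨v, ⟨hmem.2, hmem.1⟩, huniq', hmem.2, hmem.1, Or.inl huniq'⟩
end

section
/- For any two distinct points p₁, p₂ ∈ ℝ², there exists exactly one stable tropical line passing through both of them. -/
lemma mem_tropLine {p v : ℝ × ℝ} :
    p ∈ tropLine v ↔
      (p.2 = v.2 ∧ p.1 ≤ v.1) ∨ (p.1 = v.1 ∧ p.2 ≤ v.2) ∨
        (p.1 - v.1 = p.2 - v.2 ∧ v.1 ≤ p.1) := by
  constructor
  · rintro ((⟨t, ht, rfl⟩ | ⟨t, ht, rfl⟩) | ⟨t, ht, rfl⟩)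
    · refine Or.inl ⟨?_, ?_⟩ <;> simp [Prod.smul_mk, smul_eq_mul] <;> linarith
    · refine Or.inr (Or.inl ⟨?_, ?_⟩) <;> simp [Prod.smul_mk, smul_eq_mul] <;> linarith
    · refine Or.inr (Or.inr ⟨?_, ?_⟩) <;> simp [Prod.smul_mk, smul_eq_mul] <;> linarith
  · rintro (⟨h1, h2⟩ | ⟨h1, h2⟩ | ⟨h1, h2⟩)
    · exact Or.inl (Or.inl ⟨v.1 - p.1, by linarith, by
        simp [Prod.smul_mk, smul_eq_mul, Prod.ext_iff] <;> linarith⟩)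
    · exact Or.inl (Or.inr ⟨v.2 - p.2, by linarith, by
        simp [Prod.smul_mk, smul_eq_mul, Prod.ext_iff] <;> linarith⟩)
    · exact Or.inr ⟨p.1 - v.1, by linarith, by
        simp [Prod.smul_mk, smul_eq_mul, Prod.ext_iff] <;> linarith⟩

lemma vertex_mem (v : ℝ × ℝ) : v ∈ tropLine v := by
  rw [mem_tropLine]; exact Or.inl ⟨rfl, le_refl _⟩

lemma prod_eq {w v : ℝ × ℝ} (h1 : w.1 = v.1) (h2 : w.2 = v.2) : w = v :=
  Prod.ext_iff.mpr ⟨h1, h2⟩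

lemma not_both {p q : ℝ × ℝ} (h : p ≠ q) (h1 : q ∈ tropLine p) (h2 : p ∈ tropLine q) :
    False := by
  rw [mem_tropLine] at h1 h2
  apply h
  rcases h1 with ⟨a1, a2⟩ | ⟨a1, a2⟩ | ⟨a1, a2⟩ <;>
    rcases h2 with ⟨b1, b2⟩ | ⟨b1, b2⟩ | ⟨b1, b2⟩ <;>
    exact prod_eq (by linarith) (by linarith)

lemma stable_comm {p q v : ℝ × ℝ} (hs : StableThrough p q v) : StableThrough q p v := by
  obtain ⟨h1, h2, h3⟩ := hs
  refine ⟨h2, h1, ?_⟩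
  rcases h3 with h3 | h3 | h3
  · exact Or.inl fun w ⟨hw1, hw2⟩ => h3 w ⟨hw2, hw1⟩
  · exact Or.inr (Or.inr h3)
  · exact Or.inr (Or.inl h3)

lemma genD1 {p q : ℝ × ℝ} (hx : p.1 < q.1) (hy : q.2 < p.2) :
    StableThrough p q (q.1, p.2) := by
  refine ⟨mem_tropLine.mpr (Or.inl ⟨rfl, le_of_lt hx⟩),
    mem_tropLine.mpr (Or.inr (Or.inl ⟨rfl, le_of_lt hy⟩)), Or.inl ?_⟩
  rintro w ⟨hw1, hw2⟩
  rw [mem_tropLine] at hw1 hw2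
  rcases hw1 with ⟨a1, a2⟩ | ⟨a1, a2⟩ | ⟨a1, a2⟩ <;>
    rcases hw2 with ⟨b1, b2⟩ | ⟨b1, b2⟩ | ⟨b1, b2⟩ <;>
    exact prod_eq (by simp <;> linarith) (by simp <;> linarith)

lemma genD2 {p q : ℝ × ℝ} (hd : p.1 - p.2 < q.1 - q.2) (hy : p.2 < q.2) :
    StableThrough p q (q.1 - q.2 + p.2, p.2) := by
  refine ⟨mem_tropLine.mpr (Or.inl ⟨rfl, by simp <;> linarith⟩),
    mem_tropLine.mpr (Or.inr (Or.inr ⟨by simp <;> linarith, by simp <;> linarith⟩)),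
    Or.inl ?_⟩
  rintro w ⟨hw1, hw2⟩
  rw [mem_tropLine] at hw1 hw2
  rcases hw1 with ⟨a1, a2⟩ | ⟨a1, a2⟩ | ⟨a1, a2⟩ <;>
    rcases hw2 with ⟨b1, b2⟩ | ⟨b1, b2⟩ | ⟨b1, b2⟩ <;>
    exact prod_eq (by simp <;> linarith) (by simp <;> linarith)

lemma genD3 {p q : ℝ × ℝ} (hd : q.1 - q.2 < p.1 - p.2) (hx : p.1 < q.1) :
    StableThrough p q (p.1, p.1 - q.1 + q.2) := by
  refine ⟨mem_tropLine.mpr (Or.inr (Or.inl ⟨rfl, by simp <;> linarith⟩)),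
    mem_tropLine.mpr (Or.inr (Or.inr ⟨by simp <;> linarith, by simp <;> linarith⟩)),
    Or.inl ?_⟩
  rintro w ⟨hw1, hw2⟩
  rw [mem_tropLine] at hw1 hw2
  rcases hw1 with ⟨a1, a2⟩ | ⟨a1, a2⟩ | ⟨a1, a2⟩ <;>
    rcases hw2 with ⟨b1, b2⟩ | ⟨b1, b2⟩ | ⟨b1, b2⟩ <;>
    exact prod_eq (by simp <;> linarith) (by simp <;> linarith)

/-- Through any two distinct points of the tropical plane there passes exactly one
stable tropical line. -/
theorem existsUnique_stable_line (p₁ p₂ : ℝ × ℝ) (h : p₁ ≠ p₂) :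
    ∃! v : ℝ × ℝ, StableThrough p₁ p₂ v := by
  have key : ∃ v, StableThrough p₁ p₂ v := by
    rcases lt_trichotomy p₁.1 p₂.1 with hx | hx | hx <;>
      rcases lt_trichotomy p₁.2 p₂.2 with hy | hy | hy
    · rcases lt_trichotomy (p₁.1 - p₁.2) (p₂.1 - p₂.2) with hd | hd | hd
      · exact ⟨_, genD2 hd hy⟩
      · exact ⟨p₁, vertex_mem p₁,
          mem_tropLine.mpr (Or.inr (Or.inr ⟨by linarith, le_of_lt hx⟩)),
          Or.inr (Or.inl rfl)⟩
      · exact ⟨_, genD3 hd hx⟩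
    · exact ⟨p₂, mem_tropLine.mpr (Or.inl ⟨hy, le_of_lt hx⟩), vertex_mem p₂,
        Or.inr (Or.inr rfl)⟩
    · exact ⟨_, genD1 hx hy⟩
    · exact ⟨p₂, mem_tropLine.mpr (Or.inr (Or.inl ⟨hx, le_of_lt hy⟩)), vertex_mem p₂,
        Or.inr (Or.inr rfl)⟩
    · exact absurd (prod_eq hx hy) h
    · exact ⟨p₁, vertex_mem p₁, mem_tropLine.mpr (Or.inr (Or.inl ⟨hx.symm, le_of_lt hy⟩)),
        Or.inr (Or.inl rfl)⟩
    · exact ⟨_, stable_comm (genD1 hx hy)⟩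
    · exact ⟨p₁, vertex_mem p₁, mem_tropLine.mpr (Or.inl ⟨hy.symm, le_of_lt hx⟩),
        Or.inr (Or.inl rfl)⟩
    · rcases lt_trichotomy (p₁.1 - p₁.2) (p₂.1 - p₂.2) with hd | hd | hd
      · exact ⟨_, stable_comm (genD3 hd hx)⟩
      · exact ⟨p₂, mem_tropLine.mpr (Or.inr (Or.inr ⟨by linarith, le_of_lt hx⟩)),
          vertex_mem p₂, Or.inr (Or.inr rfl)⟩
      · exact ⟨_, stable_comm (genD2 hd hy)⟩
  obtain ⟨v, hv⟩ := key
  refine ⟨v, hv, fun y hy => ?_⟩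
  obtain ⟨hv1, hv2, hv3⟩ := hv
  obtain ⟨hy1, hy2, hy3⟩ := hy
  rcases hv3 with hv3 | hv3 | hv3
  · exact hv3 y ⟨hy1, hy2⟩
  · rcases hy3 with hy3 | hy3 | hy3
    · exact (hy3 v ⟨hv1, hv2⟩).symm
    · rw [hy3, hv3]
    · exact absurd (not_both h (hv3 ▸ hv2) (hy3 ▸ hy1)) not_false
  · rcases hy3 with hy3 | hy3 | hy3
    · exact (hy3 v ⟨hv1, hv2⟩).symm
    · exact absurd (not_both h (hy3 ▸ hy2) (hv3 ▸ hv1)) not_false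
    · rw [hy3, hv3]
end

section
/- (Classical de Bruijn–Erdős, inequality part) Let (X, B) be a finite linear space: X a finite set of 'points', B a family of proper subsets ('lines') of X each of cardinality at least 2, such that every pair of distinct points lies in exactly one line. If |B| > 1, then |B| ≥ |X|. -/
/-- **de Bruijn–Erdős theorem, inequality part.** In a finite linear space `(X, B)`
(every line is a proper subset of `X` of size at least two, and every pair of distinct
points lies on a unique line) with more than one line, the number of lines is at least
the number of points. -/
theorem deBruijn_Erdos_card (α : Type*) [Fintype α] [DecidableEq α]
    (B : Finset (Finset α))
    (hproper : ∀ l ∈ B, l ≠ Finset.univ)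
    (htwo : ∀ l ∈ B, 2 ≤ l.card)
    (hunique : ∀ p q : α, p ≠ q → ∃! l, l ∈ B ∧ p ∈ l ∧ q ∈ l)
    (hB : 1 < B.card) :
    Fintype.card α ≤ B.card := by
  by_contra hlt
  push_neg at hlt
  set n := Fintype.card α with hn
  set m := B.card with hm
  classical
  set r : α → ℕ := fun p => (B.filter (fun l => p ∈ l)).card with hr
  -- the canonical line through two distinct points
  have line : ∀ p q : α, p ≠ q → {l : Finset α // l ∈ B ∧ p ∈ l ∧ q ∈ l ∧
      ∀ l' ∈ B, p ∈ l' → q ∈ l' → l' = l} := by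
    intro p q hpq
    have h := hunique p q hpq
    exact ⟨h.choose, h.choose_spec.1.1, h.choose_spec.1.2.1, h.choose_spec.1.2.2,
      fun l' h1 h2 h3 => h.choose_spec.2 l' ⟨h1, h2, h3⟩⟩
  -- Lemma A : if p ∉ l then l.card ≤ r p
  have lemA : ∀ l ∈ B, ∀ p, p ∉ l → l.card ≤ r p := by
    intro l hl p hp
    set f : α → Finset α := fun q =>
      if h : p ≠ q then (line p q h).1 else ∅ with hf
    apply Finset.card_le_card_of_injOn f
    · intro q hq
      have hpq : p ≠ q := fun h => hp (h ▸ hq)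
      simp only [hf, dif_pos hpq]
      obtain ⟨hb, hpm, hqm, _⟩ := (line p q hpq).2
      exact Finset.mem_filter.mpr ⟨hb, hpm⟩
    · intro q hq q' hq' hfeq
      by_contra hne
      have hpq : p ≠ q := fun h => hp (h ▸ hq)
      have hpq' : p ≠ q' := fun h => hp (h ▸ hq')
      simp only [hf, dif_pos hpq, dif_pos hpq'] at hfeq
      obtain ⟨hb, hpm, hqm, _⟩ := (line p q hpq).2
      obtain ⟨hb', hpm', hqm', _⟩ := (line p q' hpq').2
      obtain ⟨hb2, hq2, hq2', hu2⟩ := (line q q' hne).2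
      have h1 : l = (line q q' hne).1 := hu2 l hl hq hq'
      have h2 : (line p q hpq).1 = (line q q' hne).1 :=
        hu2 _ hb hqm (hfeq ▸ hqm')
      exact hp (h1 ▸ h2 ▸ hpm)
  -- Lemma B : every point misses some line
  have lemB : ∀ p : α, ∃ l ∈ B, p ∉ l := by
    intro p
    obtain ⟨l, hl⟩ := Finset.card_pos.mp (Nat.lt_of_lt_of_le Nat.one_pos hB.le)
    by_cases hpl : p ∈ l
    · have h2 : 2 ≤ l.card := htwo l hl
      obtain ⟨a, ha, hap⟩ : ∃ a ∈ l, a ≠ p := by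
        obtain ⟨a, b, ha, hb, hab⟩ := Finset.one_lt_card_iff.mp h2
        by_cases h : a = p
        · exact ⟨b, hb, fun hbp => hab (h.trans hbp.symm)⟩
        · exact ⟨a, ha, h⟩
      obtain ⟨q, hq⟩ : ∃ q, q ∉ l := by
        by_contra h
        push_neg at h
        exact hproper l hl (Finset.eq_univ_iff_forall.mpr h)
      have haq : a ≠ q := fun h => hq (h ▸ ha)
      obtain ⟨hb, ham, hqm, hu⟩ := (line a q haq).2
      refine ⟨(line a q haq).1, hb, fun hpm => ?_⟩
      obtain ⟨l', hl', hu'⟩ := hunique p a hap.symm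
      have e1 : l = l' := hu' l ⟨hl, hpl, ha⟩
      have e2 : (line a q haq).1 = l' := hu' _ ⟨hb, hpm, ham⟩
      have e3 : (line a q haq).1 = l := e2.trans e1.symm
      exact hq (e3 ▸ hqm)
    · exact ⟨l, hl, hpl⟩
  have hrlt : ∀ p : α, r p < m := by
    intro p
    obtain ⟨l, hl, hpl⟩ := lemB p
    apply Finset.card_lt_card
    refine ⟨Finset.filter_subset _ _, fun hsub => ?_⟩
    exact hpl (Finset.mem_filter.mp (hsub hl)).2
  have hkn : ∀ l ∈ B, l.card < n := by
    intro l hl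
    exact Finset.card_lt_card ((Finset.subset_univ l).ssubset_of_ne (hproper l hl))
  have hm1 : 0 < m := Nat.lt_of_lt_of_le Nat.one_pos hB.le
  have hn0 : (0:ℚ) < n := by exact_mod_cast Nat.lt_of_lt_of_le hm1 hlt.le
  have hm0 : (0:ℚ) < m := by exact_mod_cast hm1
  -- first double sum equals 1
  have key1 : ∑ l ∈ B, ∑ p ∈ Finset.univ \ l,
      (1 : ℚ) / (m * (n - l.card)) = 1 := by
    have : ∀ l ∈ B, ∑ p ∈ Finset.univ \ l,
        (1 : ℚ) / (m * (n - l.card)) = 1 / m := by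
      intro l hl
      rw [Finset.sum_const, Finset.card_sdiff_of_subset (Finset.subset_univ l),
        Finset.card_univ, nsmul_eq_mul]
      have hk : (l.card : ℚ) < n := by exact_mod_cast hkn l hl
      have hne : (n : ℚ) - l.card ≠ 0 := by linarith
      rw [Nat.cast_sub (hkn l hl).le]
      field_simp
    rw [Finset.sum_congr rfl this, Finset.sum_const, nsmul_eq_mul]
    field_simp
    rfl
  -- second double sum equals 1
  have key2 : ∑ p : α, ∑ l ∈ B.filter (fun l => p ∉ l),
      (1 : ℚ) / (n * (m - r p)) = 1 := by
    have : ∀ p : α, ∑ l ∈ B.filter (fun l => p ∉ l),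
        (1 : ℚ) / (n * (m - r p)) = 1 / n := by
      intro p
      have hcard : (B.filter (fun l => p ∉ l)).card = m - r p := by
        have : (B.filter (fun l => p ∉ l)) = B \ (B.filter (fun l => p ∈ l)) := by
          rw [Finset.sdiff_eq_filter]
          exact Finset.filter_congr (fun l hl => by simp [hl])
        rw [this, Finset.card_sdiff_of_subset (Finset.filter_subset _ _)]
      rw [Finset.sum_const, hcard, nsmul_eq_mul]
      have hrp : (r p : ℚ) < m := by exact_mod_cast hrlt p
      have hne : (m : ℚ) - r p ≠ 0 := by linarith
      rw [Nat.cast_sub (hrlt p).le]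
      field_simp
    rw [Finset.sum_congr rfl (fun p _ => this p), Finset.sum_const,
      Finset.card_univ, nsmul_eq_mul]
    field_simp
    rfl
  -- reindex the second sum
  have swap : ∑ p : α, ∑ l ∈ B.filter (fun l => p ∉ l),
      (1 : ℚ) / (n * (m - r p)) =
      ∑ l ∈ B, ∑ p ∈ Finset.univ \ l, (1 : ℚ) / (n * (m - r p)) := by
    refine Finset.sum_comm' ?_
    intro p l
    simp only [Finset.mem_univ, Finset.mem_filter, Finset.mem_sdiff, true_and]
    tauto
  -- strict comparison
  have hstrict : ∑ l ∈ B, ∑ p ∈ Finset.univ \ l,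
      (1 : ℚ) / (m * (n - l.card)) <
      ∑ l ∈ B, ∑ p ∈ Finset.univ \ l, (1 : ℚ) / (n * (m - r p)) := by
    apply Finset.sum_lt_sum_of_nonempty
    · exact Finset.card_pos.mp (Nat.lt_of_lt_of_le Nat.one_pos hB.le)
    intro l hl
    apply Finset.sum_lt_sum_of_nonempty
    · rw [Finset.sdiff_nonempty]
      intro hsub
      exact hproper l hl (Finset.eq_univ_iff_forall.mpr (fun x => hsub (Finset.mem_univ x)))
    intro p hp
    have hpl : p ∉ l := (Finset.mem_sdiff.mp hp).2
    have hA : (l.card : ℚ) ≤ r p := by exact_mod_cast lemA l hl p hpl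
    have hrp : (r p : ℚ) + 1 ≤ m := by exact_mod_cast hrlt p
    have hk2 : (2 : ℚ) ≤ l.card := by exact_mod_cast htwo l hl
    have hkn' : (l.card : ℚ) + 1 ≤ n := by exact_mod_cast hkn l hl
    have hmn : (m : ℚ) + 1 ≤ n := by exact_mod_cast hlt
    rw [div_lt_div_iff₀ (by nlinarith) (by nlinarith)]
    nlinarith
  rw [key1] at hstrict
  rw [← swap, key2] at hstrict
  exact lt_irrefl 1 hstrict
end

section
/- In a finite linear space (X, B) with |B| = |X| > 1, any two distinct lines of B intersect in a common point. -/
/-- In a finite linear space `(X, B)` with `|B| = |X| > 1`, any two distinct lines meet in a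
common point. -/
theorem deBruijn_Erdos_equality_case (α : Type*) [Fintype α] [DecidableEq α]
    (B : Finset (Finset α))
    (hproper : ∀ l ∈ B, l ≠ Finset.univ)
    (htwo : ∀ l ∈ B, 2 ≤ l.card)
    (hunique : ∀ p q : α, p ≠ q → ∃! l, l ∈ B ∧ p ∈ l ∧ q ∈ l)
    (hB : 1 < B.card)
    (heq : B.card = Fintype.card α) :
    ∀ l₁ ∈ B, ∀ l₂ ∈ B, l₁ ≠ l₂ → ∃ p : α, p ∈ l₁ ∧ p ∈ l₂ := by
  classical
  -- set up a `Configuration` structure with points `α` and lines `↥B`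
  letI : Membership α ↥B := ⟨fun l p => p ∈ l.val⟩
  have hmem : ∀ (p : α) (l : ↥B), p ∈ l ↔ p ∈ l.val := fun _ _ => Iff.rfl
  -- every point avoids some line
  have hexline : ∀ p : α, ∃ l : ↥B, p ∉ l := by
    intro p
    obtain ⟨l₀, hl₀⟩ := Finset.card_pos.mp (zero_lt_one.trans hB)
    by_cases hp : p ∈ l₀
    · obtain ⟨r, hr⟩ : ∃ r, r ∉ l₀ := by
        by_contra h
        push_neg at h
        exact hproper l₀ hl₀ (Finset.eq_univ_iff_forall.mpr h)
      obtain ⟨s, hs, hsp⟩ := Finset.exists_mem_ne (lt_of_lt_of_le one_lt_two (htwo l₀ hl₀)) p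
      have hrs : r ≠ s := fun h => hr (h ▸ hs)
      obtain ⟨l, ⟨hlB, hrl, hsl⟩, hu⟩ := hunique r s hrs
      refine ⟨⟨l, hlB⟩, fun hpl : p ∈ l => ?_⟩
      have hps : p ≠ s := hsp.symm
      obtain ⟨l', ⟨hl'B, hpl', hsl'⟩, hu'⟩ := hunique p s hps
      have h1 : l = l' := hu' l ⟨hlB, hpl, hsl⟩
      have h2 : l₀ = l' := hu' l₀ ⟨hl₀, hp, hs⟩
      exact hr (by rw [h2, ← h1]; exact hrl)
    · exact ⟨⟨l₀, hl₀⟩, hp⟩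
  letI nd : Configuration.Nondegenerate α ↥B :=
    { exists_point := by
        intro l
        obtain ⟨p, hp⟩ := not_forall.mp
          (fun h => hproper l.val l.2 (Finset.eq_univ_iff_forall.mpr h))
        exact ⟨p, hp⟩
      exists_line := hexline
      eq_or_eq := by
        intro p₁ p₂ l₁ l₂ h₁ h₂ h₃ h₄
        by_cases hp : p₁ = p₂
        · exact Or.inl hp
        · obtain ⟨l, -, hu⟩ := hunique p₁ p₂ hp
          refine Or.inr (Subtype.ext ?_)
          rw [hu l₁.val ⟨l₁.2, h₁, h₂⟩, hu l₂.val ⟨l₂.2, h₃, h₄⟩] }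
  letI hl : Configuration.HasLines α ↥B :=
    { nd with
      mkLine := fun {p q} h => ⟨(hunique p q h).choose, (hunique p q h).choose_spec.1.1⟩
      mkLine_ax := fun {p q} h =>
        ⟨(hunique p q h).choose_spec.1.2.1, (hunique p q h).choose_spec.1.2.2⟩ }
  have hcard : Fintype.card α = Fintype.card ↥B := by
    rw [Fintype.card_coe]; exact heq.symm
  have hp := Configuration.HasLines.hasPoints hcard
  intro l₁ hl₁ l₂ hl₂ hne
  have hne' : (⟨l₁, hl₁⟩ : ↥B) ≠ ⟨l₂, hl₂⟩ := fun h => hne (congrArg Subtype.val h)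
  obtain ⟨h1, h2⟩ := hp.mkPoint_ax hne'
  exact ⟨hp.mkPoint hne', h1, h2⟩
end

section
/- The tropical Sylvester–Gallai theorem fails for stable tropical lines: there exists a set of 4 points in ℝ² such that no stable tropical line determined by the set passes through exactly two of the points. -/
/-- The tropical line with vertex `w` is a stable line determined by the point set `S` if it
passes through a subset `T ⊆ S` of at least two points and is either the unique tropical
line through `T` or has a point of `T` as its vertex. -/
def StableDetermined (S : Finset (ℝ × ℝ)) (w : ℝ × ℝ) : Prop :=
  ∃ T : Finset (ℝ × ℝ), T ⊆ S ∧ 2 ≤ T.card ∧ (∀ p ∈ T, p ∈ tropLine w) ∧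
    ((∀ w' : ℝ × ℝ, (∀ p ∈ T, p ∈ tropLine w') → w' = w) ∨ w ∈ T)

lemma memL (p v : ℝ × ℝ) : p ∈ tropLine v ↔
    ((p.2 = v.2 ∧ p.1 ≤ v.1) ∨ (p.1 = v.1 ∧ p.2 ≤ v.2) ∨
      (p.1 - v.1 = p.2 - v.2 ∧ v.1 ≤ p.1)) := by
  unfold tropLine tropRay
  simp only [Set.mem_union, Set.mem_setOf_eq, Prod.ext_iff, Prod.fst_add, Prod.snd_add,
    Prod.smul_fst, Prod.smul_snd, smul_eq_mul]
  constructor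
  · rintro ((⟨t,ht,h1,h2⟩|⟨t,ht,h1,h2⟩)|⟨t,ht,h1,h2⟩)
    · exact Or.inl ⟨by linarith, by nlinarith⟩
    · exact Or.inr (Or.inl ⟨by linarith, by nlinarith⟩)
    · exact Or.inr (Or.inr ⟨by linarith, by nlinarith⟩)
  · rintro (⟨h2,h1⟩|⟨h1,h2⟩|⟨h1,h2⟩)
    · exact Or.inl (Or.inl ⟨v.1 - p.1, by linarith, by constructor <;> ring_nf <;> linarith⟩)
    · exact Or.inl (Or.inr ⟨v.2 - p.2, by linarith, by constructor <;> ring_nf <;> linarith⟩)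
    · exact Or.inr ⟨p.1 - v.1, by linarith, by constructor <;> ring_nf <;> linarith⟩

noncomputable def SG4 : Finset (ℝ × ℝ) := {(0,1),(1,0),(1,1),(2,2)}

lemma SG4card : SG4.card = 4 := by
  rw [SG4]
  rw [Finset.card_insert_of_notMem (by norm_num [Prod.ext_iff]),
    Finset.card_insert_of_notMem (by norm_num [Prod.ext_iff]),
    Finset.card_insert_of_notMem (by norm_num [Prod.ext_iff]), Finset.card_singleton]

lemma memSG4 (p : ℝ × ℝ) : p ∈ SG4 ↔ p = (0,1) ∨ p = (1,0) ∨ p = (1,1) ∨ p = (2,2) := by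
  simp [SG4]

lemma setC : {p : ℝ × ℝ | p ∈ SG4 ∧ p ∈ tropLine (1,1)} = ↑SG4 := by
  ext p
  simp only [Set.mem_setOf_eq, Finset.coe_insert, Finset.mem_coe]
  constructor
  · exact fun h => h.1
  · intro hp
    refine ⟨hp, ?_⟩
    rcases (memSG4 p).mp hp with rfl|rfl|rfl|rfl <;> norm_num [memL]

lemma setA : {p : ℝ × ℝ | p ∈ SG4 ∧ p ∈ tropLine (0,1)} = {((0:ℝ),(1:ℝ))} := by
  ext p
  simp only [Set.mem_setOf_eq, Set.mem_singleton_iff]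
  constructor
  · rintro ⟨hp, hl⟩
    rcases (memSG4 p).mp hp with rfl|rfl|rfl|rfl
    · rfl
    all_goals (exfalso; norm_num [memL] at hl)
  · rintro rfl
    exact ⟨(memSG4 _).mpr (Or.inl rfl), by norm_num [memL]⟩

lemma setB : {p : ℝ × ℝ | p ∈ SG4 ∧ p ∈ tropLine (1,0)} = {((1:ℝ),(0:ℝ))} := by
  ext p
  simp only [Set.mem_setOf_eq, Set.mem_singleton_iff]
  constructor
  · rintro ⟨hp, hl⟩
    rcases (memSG4 p).mp hp with rfl|rfl|rfl|rfl
    · exfalso; norm_num [memL] at hl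
    · rfl
    all_goals (exfalso; norm_num [memL] at hl)
  · rintro rfl
    exact ⟨(memSG4 _).mpr (Or.inr (Or.inl rfl)), by norm_num [memL]⟩

lemma setD : {p : ℝ × ℝ | p ∈ SG4 ∧ p ∈ tropLine (2,2)} = {((2:ℝ),(2:ℝ))} := by
  ext p
  simp only [Set.mem_setOf_eq, Set.mem_singleton_iff]
  constructor
  · rintro ⟨hp, hl⟩
    rcases (memSG4 p).mp hp with rfl|rfl|rfl|rfl
    · exfalso; norm_num [memL] at hl
    · exfalso; norm_num [memL] at hl
    · exfalso; norm_num [memL] at hl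
    · rfl
  · rintro rfl
    exact ⟨(memSG4 _).mpr (Or.inr (Or.inr (Or.inr rfl))), by norm_num [memL]⟩


/-- The tropical Sylvester–Gallai theorem fails for stable tropical lines: there is a set of
four points such that no stable tropical line determined by the set passes through exactly
two of the points. -/
theorem sylvester_gallai_fails_for_stable_lines :
    ∃ S : Finset (ℝ × ℝ), S.card = 4 ∧
      ∀ w : ℝ × ℝ, StableDetermined S w →
        Set.ncard {p : ℝ × ℝ | p ∈ S ∧ p ∈ tropLine w} ≠ 2 := by
  refine ⟨SG4, SG4card, ?_⟩
  intro w hst hn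
  obtain ⟨T, hTS, hcard, hTl, h⟩ := hst
  rcases h with huniq | hwT
  · have h1 : ((1:ℝ),(1:ℝ)) = w := huniq (1,1) (fun p hp => by
      rcases (memSG4 p).mp (hTS hp) with rfl|rfl|rfl|rfl <;> norm_num [memL])
    subst h1
    rw [setC, Set.ncard_coe_finset, SG4card] at hn
    norm_num at hn
  · rcases (memSG4 w).mp (hTS hwT) with rfl|rfl|rfl|rfl
    · rw [setA, Set.ncard_singleton] at hn; norm_num at hn
    · rw [setB, Set.ncard_singleton] at hn; norm_num at hn
    · rw [setC, Set.ncard_coe_finset, SG4card] at hn; norm_num at hn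
    · rw [setD, Set.ncard_singleton] at hn; norm_num at hn
end

section
/- Let t be the total number of faces in the dual Newton subdivision of an arrangement of n distinct tropical lines in ℝ². Then n ≤ t ≤ n(n-1)/2 + n. -/
/-- The vertices of the tropical line arrangement with line vertices `v i`: points lying on
two rays of the arrangement with distinct directions.  These are exactly the points dual to
the (2-dimensional) faces of the dual Newton subdivision of the arrangement. -/
def arrVertices (n : ℕ) (v : Fin n → ℝ × ℝ) : Set (ℝ × ℝ) :=
  {p | ∃ i j : Fin n, ∃ d ∈ tropDirs, ∃ d' ∈ tropDirs,
    d ≠ d' ∧ p ∈ tropRay (v i) d ∧ p ∈ tropRay (v j) d'}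

/-- The crossing points of the rays of the two tropical lines with vertices `a` and `b`. -/
def pairSet (a b : ℝ × ℝ) : Set (ℝ × ℝ) :=
  {p | ∃ d ∈ tropDirs, ∃ d' ∈ tropDirs, d ≠ d' ∧ p ∈ tropRay a d ∧ p ∈ tropRay b d'}

lemma tropDirs_cases {d : ℝ × ℝ} (h : d ∈ tropDirs) :
    d = (-1, 0) ∨ d = (0, -1) ∨ d = (1, 1) := h

set_option maxHeartbeats 2000000 in
/-- Two tropical lines contribute at most one crossing point. -/
lemma pairSet_subsingleton (a b : ℝ × ℝ) : (pairSet a b).Subsingleton := by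
  rintro ⟨p1, p2⟩ ⟨d, hd, e, he, hde, ⟨t1, ht1, hp1⟩, ⟨s1, hs1, hp2⟩⟩
         ⟨q1, q2⟩ ⟨d2, hd2, e2, he2, hde2, ⟨t2, ht2, hq1⟩, ⟨s2, hs2, hq2⟩⟩
  obtain ⟨a1, a2⟩ := a
  obtain ⟨b1, b2⟩ := b
  rcases tropDirs_cases hd with rfl | rfl | rfl <;>
    rcases tropDirs_cases he with rfl | rfl | rfl <;>
      rcases tropDirs_cases hd2 with rfl | rfl | rfl <;>
        rcases tropDirs_cases he2 with rfl | rfl | rfl <;>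
          first
          | exact absurd rfl hde
          | exact absurd rfl hde2
          | (simp only [Prod.smul_mk, Prod.mk_add_mk, Prod.mk.injEq, smul_eq_mul,
               mul_neg, mul_one, mul_zero, add_zero, neg_mul, one_mul]
               at hp1 hp2 hq1 hq2 ⊢;
             obtain ⟨e1, e2⟩ := hp1; obtain ⟨e3, e4⟩ := hp2;
             obtain ⟨e5, e6⟩ := hq1; obtain ⟨e7, e8⟩ := hq2;
             exact ⟨by linarith, by linarith⟩)

lemma pairSet_comm (a b : ℝ × ℝ) : pairSet a b = pairSet b a := by
  ext p
  constructor <;> rintro ⟨d, hd, e, he, hde, h1, h2⟩ <;>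
    exact ⟨e, he, d, hd, hde.symm, h2, h1⟩

open Classical in
noncomputable def pairPt (a b : ℝ × ℝ) : ℝ × ℝ :=
  if h : (pairSet a b).Nonempty then h.choose else 0

lemma pairPt_comm (a b : ℝ × ℝ) : pairPt a b = pairPt b a := by
  unfold pairPt
  congr 1 <;> rw [pairSet_comm]

lemma eq_pairPt {a b p : ℝ × ℝ} (hp : p ∈ pairSet a b) : p = pairPt a b := by
  have hne : (pairSet a b).Nonempty := ⟨p, hp⟩
  rw [pairPt, dif_pos hne]
  exact pairSet_subsingleton a b hp hne.choose_spec

/-- The total number `t` of faces of the dual Newton subdivision of an arrangement of `n`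
distinct tropical lines (equivalently, the number of vertices of the arrangement) satisfies
`n ≤ t ≤ n(n-1)/2 + n`. -/
theorem face_count_bounds (n : ℕ) (v : Fin n → ℝ × ℝ) (hv : Function.Injective v) :
    n ≤ (arrVertices n v).ncard ∧ (arrVertices n v).ncard ≤ n * (n - 1) / 2 + n := by
  classical
  set g : Sym2 (Fin n) → ℝ × ℝ :=
    Sym2.lift ⟨fun i j => pairPt (v i) (v j), fun i j => by simp [pairPt_comm]⟩ with hg
  have hsub : arrVertices n v ⊆ Set.range g := by
    rintro p ⟨i, j, d, hd, e, he, hde, h1, h2⟩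
    have hp : p ∈ pairSet (v i) (v j) := ⟨d, hd, e, he, hde, h1, h2⟩
    exact ⟨s(i, j), by rw [hg, Sym2.lift_mk]; exact (eq_pairPt hp).symm⟩
  have hfin : (arrVertices n v).Finite := (Set.finite_range g).subset hsub
  constructor
  · have hrange : Set.range v ⊆ arrVertices n v := by
      rintro p ⟨i, rfl⟩
      refine ⟨i, i, (-1, 0), by simp [tropDirs], (0, -1), by simp [tropDirs],
        by norm_num [Prod.ext_iff], ⟨0, le_refl 0, by simp⟩, ⟨0, le_refl 0, by simp⟩⟩
    have : (Set.range v).ncard = n := by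
      rw [← Set.image_univ, Set.ncard_image_of_injective _ hv, Set.ncard_univ,
        Nat.card_eq_fintype_card, Fintype.card_fin]
    calc n = (Set.range v).ncard := this.symm
      _ ≤ (arrVertices n v).ncard := Set.ncard_le_ncard hrange hfin
  · have h1 : (arrVertices n v).ncard ≤ (Set.range g).ncard :=
      Set.ncard_le_ncard hsub (Set.finite_range g)
    have h2 : (Set.range g).ncard ≤ Fintype.card (Sym2 (Fin n)) := by
      calc (Set.range g).ncard = (g '' Set.univ).ncard := by rw [Set.image_univ]
        _ ≤ (Set.univ : Set (Sym2 (Fin n))).ncard := Set.ncard_image_le Set.finite_univ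
        _ = Fintype.card (Sym2 (Fin n)) := by
            rw [Set.ncard_univ, Nat.card_eq_fintype_card]
    have h3 : Fintype.card (Sym2 (Fin n)) = (n + 1) * n / 2 := by
      rw [Sym2.card, Fintype.card_fin, Nat.choose_two_right]
      simp
    have h4 : (n + 1) * n / 2 = n * (n - 1) / 2 + n := by
      rcases n with _ | m
      · simp
      · show (m + 1 + 1) * (m + 1) / 2 = (m + 1) * m / 2 + (m + 1)
        obtain ⟨k, hk⟩ : Even ((m + 1) * m) := by
          rw [mul_comm]; exact Nat.even_mul_succ_self m
        have e1 : (m + 1 + 1) * (m + 1) = (m + 1) * m + 2 * (m + 1) := by ring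
        omega
    omega
end

section
/- Let L be an arrangement of n distinct tropical lines whose dual Newton subdivision has exactly n faces. Then the arrangement has no stable intersection of first kind (no stable intersection point at which no vertex of any line of the arrangement is located). -/
/-- The stable intersections of the arrangement: points where rays of distinct directions
from two distinct lines of the arrangement meet. -/
def stableIntersections (n : ℕ) (v : Fin n → ℝ × ℝ) : Set (ℝ × ℝ) :=
  {p | ∃ i j : Fin n, i ≠ j ∧ ∃ d ∈ tropDirs, ∃ d' ∈ tropDirs,
    d ≠ d' ∧ p ∈ tropRay (v i) d ∧ p ∈ tropRay (v j) d'}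

/-- If an arrangement of `n` distinct tropical lines has exactly `n` faces in its dual Newton
subdivision, then it has no stable intersection of first kind, i.e. every stable intersection
point carries the vertex of some line of the arrangement. -/
theorem no_first_kind_of_n_faces (n : ℕ) (v : Fin n → ℝ × ℝ)
    (hv : Function.Injective v) (hfaces : (arrVertices n v).ncard = n) :
    ¬ ∃ p ∈ stableIntersections n v, ∀ i : Fin n, p ≠ v i := by
  rintro ⟨p, ⟨i, j, hij, d, hd, d', hd', hdd, hpi, hpj⟩, hp⟩
  have hsub : insert p (Set.range v) ⊆ arrVertices n v := by
    rintro x (rfl | ⟨k, rfl⟩)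
    · exact ⟨i, j, d, hd, d', hd', hdd, hpi, hpj⟩
    · refine ⟨k, k, (-1, 0), by simp [tropDirs], (0, -1), by simp [tropDirs],
        by norm_num [Prod.ext_iff], ⟨0, le_refl 0, by simp⟩, ⟨0, le_refl 0, by simp⟩⟩
  have hfin : (arrVertices n v).Finite := by
    by_contra h
    rw [Set.Infinite.ncard h] at hfaces
    exact i.pos.ne' hfaces.symm
  have h1 : (insert p (Set.range v)).ncard ≤ (arrVertices n v).ncard :=
    Set.ncard_le_ncard hsub hfin
  have hr : (Set.range v).ncard = n := by
    rw [← Nat.card_coe_set_eq, Nat.card_range_of_injective hv, Nat.card_eq_fintype_card,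
      Fintype.card_fin]
  have h2 : (insert p (Set.range v)).ncard = n + 1 := by
    rw [Set.ncard_insert_of_notMem (by rintro ⟨k, rfl⟩; exact hp k rfl) (Set.finite_range v), hr]
  omega
end
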